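/- Let $K \geq 1$, $x_1, \ldots, x_K \in [0,1]$, and set $S_k = \binom{K}{k}^{-1} \sum_{|J|=k} \prod_{j \in J} x_j$. Then $1 - \frac{1}{K}\sum_{j=1}^K x_j \leq \frac{1 - \prod_{j=1}^K x_j}{1 + \sum_{k=1}^{K-1} S_k}$. -/

import Mathlib

open Finset

/-- Normalized elementary symmetric mean `S_k` of `x_1, ..., x_K`. -/
noncomputable def symMean (K : ℕ) (x : Fin K → ℝ) (k : ℕ) : ℝ :=
  ((K.choose k : ℝ))⁻¹ * ∑ J ∈ Finset.powersetCard k (Finset.univ : Finset (Fin K)),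
    ∏ j ∈ J, x j

/-- Sum of products over subsets of size `m` (unnormalized elementary symmetric). -/
noncomputable def esum {ι : Type*} (x : ι → ℝ) (s : Finset ι) (m : ℕ) : ℝ :=
  ∑ J ∈ s.powersetCard m, ∏ j ∈ J, x j

lemma esum_zero {ι : Type*} (x : ι → ℝ) (s : Finset ι) : esum x s 0 = 1 := by
  simp [esum, Finset.powersetCard_zero]

lemma esum_nonneg {ι : Type*} {x : ι → ℝ} (hx : ∀ i, 0 ≤ x i) (s : Finset ι) (m : ℕ) :
    0 ≤ esum x s m :=
  Finset.sum_nonneg fun J _ => Finset.prod_nonneg fun j _ => hx j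

lemma esum_decomp {ι : Type*} [DecidableEq ι] (x : ι → ℝ) {s : Finset ι} {i : ι}
    (hi : i ∈ s) (m : ℕ) :
    esum x s (m + 1) = esum x (s.erase i) (m + 1) + x i * esum x (s.erase i) m := by
  unfold esum
  conv_lhs => rw [← Finset.insert_erase hi]
  rw [Finset.powersetCard_succ_insert (Finset.notMem_erase i s), Finset.sum_union, Finset.sum_image]
  · congr 1
    rw [Finset.mul_sum]
    refine Finset.sum_congr rfl fun J hJ => ?_
    rw [Finset.prod_insert fun h => Finset.notMem_erase i s ((Finset.mem_powersetCard.mp hJ).1 h)]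
  · intro J hJ J' hJ' h
    have hiJ : i ∉ J := fun h' => Finset.notMem_erase i s ((Finset.mem_powersetCard.mp hJ).1 h')
    have hiJ' : i ∉ J' := fun h' => Finset.notMem_erase i s ((Finset.mem_powersetCard.mp hJ').1 h')
    have := congrArg (fun t => Finset.erase t i) h
    simpa [Finset.erase_insert hiJ, Finset.erase_insert hiJ'] using this
  · refine Finset.disjoint_left.mpr fun J hJ hJ' => ?_
    have hiJ : i ∉ J := fun h' => Finset.notMem_erase i s ((Finset.mem_powersetCard.mp hJ).1 h')
    obtain ⟨J'', _, rfl⟩ := Finset.mem_image.mp hJ'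
    exact hiJ (Finset.mem_insert_self i J'')

/-- Double counting: `∑ i, x i * esum (s \ i) m = (m+1) * esum s (m+1)`. -/
lemma esum_double {ι : Type*} [DecidableEq ι] (x : ι → ℝ) (s : Finset ι) (m : ℕ) :
    ∑ i ∈ s, x i * esum x (s.erase i) m = ((m : ℝ) + 1) * esum x s (m + 1) := by
  unfold esum
  have lhs_eq : ∑ i ∈ s, x i * ∑ J ∈ (s.erase i).powersetCard m, ∏ j ∈ J, x j
      = ∑ i ∈ s, ∑ J ∈ (s.erase i).powersetCard m, ∏ j ∈ insert i J, x j := by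
    refine Finset.sum_congr rfl fun i hi => ?_
    rw [Finset.mul_sum]
    refine Finset.sum_congr rfl fun J hJ => ?_
    rw [Finset.prod_insert fun h => Finset.notMem_erase i s ((Finset.mem_powersetCard.mp hJ).1 h)]
  have rhs_eq : ((m : ℝ) + 1) * ∑ L ∈ s.powersetCard (m + 1), ∏ j ∈ L, x j
      = ∑ L ∈ s.powersetCard (m + 1), ∑ _i ∈ L, ∏ j ∈ L, x j := by
    rw [Finset.mul_sum]
    refine Finset.sum_congr rfl fun L hL => ?_
    rw [Finset.sum_const, (Finset.mem_powersetCard.mp hL).2, nsmul_eq_mul]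
    push_cast
    ring
  rw [lhs_eq, rhs_eq, Finset.sum_sigma' s (fun i => (s.erase i).powersetCard m)
      (fun i J => ∏ j ∈ insert i J, x j),
    Finset.sum_sigma' (s.powersetCard (m + 1)) (fun L => L) (fun L _i => ∏ j ∈ L, x j)]
  refine Finset.sum_nbij' (fun p => ⟨insert p.1 p.2, p.1⟩) (fun p => ⟨p.2, p.1.erase p.2⟩)
    ?_ ?_ ?_ ?_ ?_
  · rintro ⟨i, J⟩ hp
    simp only [Finset.mem_sigma] at hp ⊢
    obtain ⟨his, hJ⟩ := hp
    rw [Finset.mem_powersetCard] at hJ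
    have hiJ : i ∉ J := fun h' => Finset.notMem_erase i s (hJ.1 h')
    refine ⟨Finset.mem_powersetCard.mpr ⟨?_, ?_⟩, Finset.mem_insert_self i J⟩
    · exact Finset.insert_subset his (hJ.1.trans (Finset.erase_subset i s))
    · rw [Finset.card_insert_of_notMem hiJ, hJ.2]
  · rintro ⟨L, i⟩ hp
    simp only [Finset.mem_sigma] at hp ⊢
    obtain ⟨hL, hiL⟩ := hp
    rw [Finset.mem_powersetCard] at hL
    refine ⟨hL.1 hiL, Finset.mem_powersetCard.mpr ⟨?_, ?_⟩⟩
    · exact Finset.erase_subset_erase i hL.1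
    · rw [Finset.card_erase_of_mem hiL, hL.2]
      omega
  · rintro ⟨i, J⟩ hp
    simp only [Finset.mem_sigma] at hp
    have hiJ : i ∉ J := fun h' =>
      Finset.notMem_erase i s ((Finset.mem_powersetCard.mp hp.2).1 h')
    simp [Finset.erase_insert hiJ]
  · rintro ⟨L, i⟩ hp
    simp only [Finset.mem_sigma] at hp
    simp [Finset.insert_erase hp.2]
  · rintro ⟨i, J⟩ _
    rfl

lemma esum_one {ι : Type*} [DecidableEq ι] (x : ι → ℝ) (s : Finset ι) :
    esum x s 1 = ∑ i ∈ s, x i := by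
  have h := esum_double x s 0
  simp only [esum_zero, mul_one] at h
  push_cast at h
  linarith [h]

/-- Exchange identity: `x i * B i - x j * B j = (x i - x j) * C` where `C` avoids both. -/
lemma esum_exchange {ι : Type*} [DecidableEq ι] (x : ι → ℝ) {s : Finset ι} {i j : ι}
    (hi : i ∈ s) (hj : j ∈ s) (hij : i ≠ j) (m : ℕ) :
    x i * esum x (s.erase i) m - x j * esum x (s.erase j) m
      = (x i - x j) * esum x ((s.erase i).erase j) m := by
  have hcomm : (s.erase j).erase i = (s.erase i).erase j := Finset.erase_right_comm
  match m with
  | 0 => simp [esum_zero]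
  | m + 1 =>
    have hji : j ∈ s.erase i := Finset.mem_erase.mpr ⟨hij.symm, hj⟩
    have hij' : i ∈ s.erase j := Finset.mem_erase.mpr ⟨hij, hi⟩
    rw [esum_decomp x hji m, esum_decomp x hij' m, hcomm]
    ring

/-- Chebyshev-type expansion. -/
lemma cheb_expand {ι : Type*} (s : Finset ι) (a b : ι → ℝ) :
    ∑ i ∈ s, ∑ j ∈ s, (a i - a j) * (b i - b j)
      = 2 * (s.card : ℝ) * ∑ i ∈ s, a i * b i - 2 * (∑ i ∈ s, a i) * (∑ i ∈ s, b i) := by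
  have inner : ∀ i ∈ s, ∑ j ∈ s, (a i - a j) * (b i - b j)
      = (s.card : ℝ) * (a i * b i) - a i * (∑ j ∈ s, b j) - (∑ j ∈ s, a j) * b i
        + ∑ j ∈ s, a j * b j := by
    intro i _
    have expand : ∀ j ∈ s, (a i - a j) * (b i - b j)
        = a i * b i - a i * b j - a j * b i + a j * b j := fun j _ => by ring
    rw [Finset.sum_congr rfl expand]
    simp only [Finset.sum_add_distrib, Finset.sum_sub_distrib, Finset.sum_const,
      ← Finset.mul_sum, ← Finset.sum_mul, nsmul_eq_mul]
  rw [Finset.sum_congr rfl inner]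
  simp only [Finset.sum_add_distrib, Finset.sum_sub_distrib, Finset.sum_const,
    ← Finset.mul_sum, ← Finset.sum_mul, nsmul_eq_mul]
  ring

/-- Key unnormalized Maclaurin-type inequality:
`K * (m+2) * E (m+2) ≤ (K - (m+1)) * E 1 * E (m+1)`. -/
lemma esum_key {K : ℕ} (x : Fin K → ℝ) (hx : ∀ i, 0 ≤ x i) (m : ℕ) :
    (K : ℝ) * (((m : ℝ) + 2) * esum x Finset.univ (m + 1 + 1))
      ≤ ((K : ℝ) - ((m : ℝ) + 1)) * (esum x Finset.univ 1 * esum x Finset.univ (m + 1)) := by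
  classical
  set s : Finset (Fin K) := Finset.univ with hs
  set B : Fin K → ℝ := fun i => esum x (s.erase i) m with hB
  have hcheb : (∑ i ∈ s, x i) * (∑ i ∈ s, x i * B i)
      ≤ (s.card : ℝ) * ∑ i ∈ s, x i * (x i * B i) := by
    have hpt : ∀ i ∈ s, ∀ j ∈ s, 0 ≤ (x i - x j) * (x i * B i - x j * B j) := by
      intro i _ j _
      rcases eq_or_ne i j with rfl | hij
      · simp
      · rw [hB]
        rw [esum_exchange x (Finset.mem_univ i) (Finset.mem_univ j) hij m]
        have := esum_nonneg hx ((s.erase i).erase j) m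
        nlinarith [sq_nonneg (x i - x j)]
    have h0 : (0 : ℝ) ≤ ∑ i ∈ s, ∑ j ∈ s, (x i - x j) * (x i * B i - x j * B j) :=
      Finset.sum_nonneg fun i hi => Finset.sum_nonneg fun j hj => hpt i hi j hj
    have hexp := cheb_expand s x (fun i => x i * B i)
    rw [hexp] at h0
    linarith
  have hcard : (s.card : ℝ) = (K : ℝ) := by simp [hs]
  have hdc1 : ∑ i ∈ s, x i * B i = ((m : ℝ) + 1) * esum x s (m + 1) := esum_double x s m
  have hdc2 : ∑ i ∈ s, x i * esum x (s.erase i) (m + 1)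
      = ((m : ℝ) + 2) * esum x s (m + 1 + 1) := by
    have h := esum_double x s (m + 1)
    push_cast at h
    push_cast
    linarith [h]
  have hE1 : esum x s 1 = ∑ i ∈ s, x i := esum_one x s
  have hprod : esum x s 1 * esum x s (m + 1)
      = ((m : ℝ) + 2) * esum x s (m + 1 + 1) + ∑ i ∈ s, x i * (x i * B i) := by
    rw [hE1, Finset.sum_mul, ← hdc2, ← Finset.sum_add_distrib]
    refine Finset.sum_congr rfl fun i _ => ?_
    rw [esum_decomp x (Finset.mem_univ i) m]
    ring
  rw [hcard] at hcheb
  rw [hE1]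
  rw [hE1] at hprod
  rw [hdc1] at hcheb
  nlinarith [hcheb, hprod]

lemma symMean_nonneg {K : ℕ} (x : Fin K → ℝ) (hx : ∀ i, 0 ≤ x i) (k : ℕ) :
    0 ≤ symMean K x k := by
  unfold symMean
  have h : 0 ≤ ∑ J ∈ Finset.powersetCard k (Finset.univ : Finset (Fin K)), ∏ j ∈ J, x j :=
    Finset.sum_nonneg fun J _ => Finset.prod_nonneg fun j _ => hx j
  positivity

/-- Maclaurin-type step: `S (k+1) ≤ S 1 * S k` for `1 ≤ k < K`. -/
lemma symMean_step {K : ℕ} (x : Fin K → ℝ) (hx : ∀ i, 0 ≤ x i) {k : ℕ}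
    (hk1 : 1 ≤ k) (hkK : k < K) :
    symMean K x (k + 1) ≤ symMean K x 1 * symMean K x k := by
  obtain ⟨m, rfl⟩ : ∃ m, k = m + 1 := ⟨k - 1, (Nat.succ_pred_eq_of_pos hk1).symm⟩
  have hkey := esum_key x hx m
  have hCk : 0 < (K.choose (m + 1) : ℝ) := by
    exact_mod_cast Nat.choose_pos (le_of_lt hkK)
  have hCk1 : 0 < (K.choose (m + 1 + 1) : ℝ) := by
    exact_mod_cast Nat.choose_pos hkK
  have hK1 : K.choose 1 = K := Nat.choose_one_right K
  have hKpos : 0 < (K : ℝ) := by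
    have h0 : 0 < K := by omega
    exact_mod_cast h0
  have hchoose : ((m : ℝ) + 2) * (K.choose (m + 1 + 1) : ℝ)
      = ((K : ℝ) - ((m : ℝ) + 1)) * (K.choose (m + 1) : ℝ) := by
    have h := Nat.choose_succ_right_eq K (m + 1)
    have hc : ((K.choose (m + 1 + 1) * (m + 1 + 1) : ℕ) : ℝ)
        = ((K.choose (m + 1) * (K - (m + 1)) : ℕ) : ℝ) := by exact_mod_cast congrArg Nat.cast h
    have hle : m + 1 ≤ K := hkK.le
    push_cast [Nat.cast_sub hle] at hc
    linarith
  unfold symMean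
  rw [hK1]
  set E1 := ∑ J ∈ Finset.powersetCard 1 (Finset.univ : Finset (Fin K)), ∏ j ∈ J, x j with hE1
  set Ek := ∑ J ∈ Finset.powersetCard (m + 1) (Finset.univ : Finset (Fin K)), ∏ j ∈ J, x j
    with hEk
  set Ek1 := ∑ J ∈ Finset.powersetCard (m + 1 + 1) (Finset.univ : Finset (Fin K)), ∏ j ∈ J, x j
    with hEk1
  have hkey' : (K : ℝ) * (((m : ℝ) + 2) * Ek1) ≤ ((K : ℝ) - ((m : ℝ) + 1)) * (E1 * Ek) := hkey
  rw [inv_mul_eq_div, inv_mul_eq_div, inv_mul_eq_div, div_mul_div_comm,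
    div_le_div_iff₀ hCk1 (mul_pos hKpos hCk)]
  have hm2 : (0 : ℝ) < (m : ℝ) + 2 := by positivity
  rw [← mul_le_mul_iff_right₀ hm2]
  calc ((m : ℝ) + 2) * (Ek1 * ((K : ℝ) * (K.choose (m + 1) : ℝ)))
      = ((K : ℝ) * (((m : ℝ) + 2) * Ek1)) * (K.choose (m + 1) : ℝ) := by ring
    _ ≤ (((K : ℝ) - ((m : ℝ) + 1)) * (E1 * Ek)) * (K.choose (m + 1) : ℝ) :=
        mul_le_mul_of_nonneg_right hkey' hCk.le
    _ = ((m : ℝ) + 2) * (E1 * Ek * (K.choose (m + 1 + 1) : ℝ)) := by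
        linear_combination (-(E1 * Ek)) * hchoose

lemma symMean_zero {K : ℕ} (x : Fin K → ℝ) : symMean K x 0 = 1 := by
  simp [symMean, Finset.powersetCard_zero]

/-- For `x_1, ..., x_K ∈ [0,1]`,
`1 - (∑ x_j)/K ≤ (1 - ∏ x_j) / (1 + ∑_{k=1}^{K-1} S_k)`. -/
theorem negFeedback_vs_rw_ineq (K : ℕ) (hK : 1 ≤ K) (x : Fin K → ℝ)
    (hx : ∀ j, x j ∈ Set.Icc (0 : ℝ) 1) :
    1 - (∑ j, x j) / K ≤
      (1 - ∏ j, x j) / (1 + ∑ k ∈ Finset.Icc 1 (K - 1), symMean K x k) := by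
  have hx0 : ∀ j, 0 ≤ x j := fun j => (hx j).1
  have hx1 : ∀ j, x j ≤ 1 := fun j => (hx j).2
  have hKpos : 0 < (K : ℝ) := by exact_mod_cast hK
  have hS1 : symMean K x 1 = (∑ j, x j) / K := by
    rw [symMean, Nat.choose_one_right, inv_mul_eq_div]
    congr 1
    exact esum_one x Finset.univ
  have hSK : symMean K x K = ∏ j, x j := by
    rw [symMean, Nat.choose_self]
    have huniv : Finset.powersetCard K (Finset.univ : Finset (Fin K)) = {Finset.univ} := by
      have h := Finset.powersetCard_self (Finset.univ : Finset (Fin K))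
      rwa [Finset.card_univ, Fintype.card_fin] at h
    rw [huniv]
    simp
  have hSnn : ∀ k, 0 ≤ symMean K x k := symMean_nonneg x hx0
  set D : ℝ := 1 + ∑ k ∈ Finset.Icc 1 (K - 1), symMean K x k with hD
  have hDpos : 0 < D := by
    have h : 0 ≤ ∑ k ∈ Finset.Icc 1 (K - 1), symMean K x k :=
      Finset.sum_nonneg fun k _ => hSnn k
    simp only [hD]; linarith
  rw [← hS1, ← hSK, le_div_iff₀ hDpos]
  have hmain : ∑ k ∈ Finset.Icc 1 K, symMean K x k ≤ symMean K x 1 * D := by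
    have himg : Finset.Icc 1 K = insert 1 ((Finset.Icc 1 (K - 1)).image (· + 1)) := by
      ext n
      simp only [Finset.mem_insert, Finset.mem_image, Finset.mem_Icc]
      constructor
      · rintro ⟨h1, h2⟩
        rcases Nat.eq_or_lt_of_le h1 with h | h
        · exact Or.inl h.symm
        · exact Or.inr ⟨n - 1, ⟨Nat.le_sub_one_of_lt h, by omega⟩, by omega⟩
      · rintro (rfl | ⟨a, ⟨ha1, ha2⟩, rfl⟩)
        · exact ⟨le_refl 1, hK⟩
        · omega
    have hre : ∑ k ∈ Finset.Icc 1 K, symMean K x k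
        = symMean K x 1 + ∑ k ∈ Finset.Icc 1 (K - 1), symMean K x (k + 1) := by
      rw [himg, Finset.sum_insert, Finset.sum_image]
      · intro a _ b _ h; simp only at h; omega
      · simp only [Finset.mem_image, Finset.mem_Icc]
        rintro ⟨a, ⟨ha1, _⟩, ha⟩; omega
    have hterm : ∀ k ∈ Finset.Icc 1 (K - 1),
        symMean K x (k + 1) ≤ symMean K x 1 * symMean K x k := by
      intro k hk
      rw [Finset.mem_Icc] at hk
      exact symMean_step x hx0 hk.1 (by omega)
    calc ∑ k ∈ Finset.Icc 1 K, symMean K x k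
        = symMean K x 1 + ∑ k ∈ Finset.Icc 1 (K - 1), symMean K x (k + 1) := hre
      _ ≤ symMean K x 1 + ∑ k ∈ Finset.Icc 1 (K - 1), symMean K x 1 * symMean K x k :=
          add_le_add_right (Finset.sum_le_sum hterm) _
      _ = symMean K x 1 * D := by rw [hD, mul_add, mul_one, Finset.mul_sum]
  have hsplit : ∑ k ∈ Finset.Icc 1 K, symMean K x k
      = (∑ k ∈ Finset.Icc 1 (K - 1), symMean K x k) + symMean K x K := by
    have h := Finset.sum_Icc_succ_top (a := 1) (b := K - 1) (by omega)
      (fun k => symMean K x k)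
    have e : K - 1 + 1 = K := by omega
    rw [e] at h
    exact h
  rw [hsplit] at hmain
  nlinarith [hmain, hDpos]
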